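/- For each real m ≥ 0 and all integers ξ, η ≥ 0: a₂(ξ−η+1, ξ+η+1, m, 1, u₁) = ((−1)^{ξ+1}/(1+m²)^{(ξ+η)/2}) · Σ_{j=0}^{⌊ξ/2⌋} ( C(⌊η/2⌋, j)·(1+m²)^{δ₂(ξη)} − C(⌊(η−1)/2⌋, j)·(1+m²)^{δ₂(ξ(η+1))} ) · C(⌊ξ/2⌋, j) · (1 − (1+m²)²)^j. -/

import Mathlib

open scoped BigOperators

/-- Direction of a checker move encoded by a Boolean: `true` = upwards-right
(vector `(ε,ε)`), `false` = upwards-left (vector `(-ε,ε)`). -/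
def dirZ (b : Bool) : ℤ := if b then 1 else -1

/-- The `k`-th direction of a path with `n` moves (dummy value `false` out of range). -/
def extd {n : ℕ} (d : Fin n → Bool) (k : ℕ) : Bool := if h : k < n then d ⟨k, h⟩ else false

/-- The (integer) space coordinate of a checker path after `k` moves. -/
def pathPos {n : ℕ} (d : Fin n → Bool) (k : ℕ) : ℤ := ∑ i ∈ Finset.range k, dirZ (extd d i)

/-- The number of turns of a checker path. -/
def pathTurns {n : ℕ} (d : Fin n → Bool) : ℕ :=
  ((Finset.range n).filter (fun k => 0 < k ∧ extd d (k - 1) ≠ extd d k)).card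

/-- Feynman checkers wave function `a(x,t,m,ε,u)` in an external field `u`, where the field
`u` is given as a function of the midpoint of an auxiliary edge. -/
noncomputable def kwf (m ε : ℝ) (u : ℝ → ℝ → ℝ) (x t : ℝ) : ℂ :=
  (((1 + m ^ 2 * ε ^ 2) ^ ((1 - t / ε) / 2) : ℝ) : ℂ) * Complex.I *
    ∑ d ∈ Finset.univ.filter
        (fun d : Fin ((⌊t / ε⌋).toNat) → Bool =>
          extd d 0 = true ∧ pathPos d ((⌊t / ε⌋).toNat) = ⌊x / ε⌋),
      (-(Complex.I) * (m * ε)) ^ (pathTurns d) *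
        ∏ k ∈ Finset.range ((⌊t / ε⌋).toNat),
          ((u (ε * pathPos d k + ε * (dirZ (extd d k)) / 2) (ε * k + ε / 2) : ℝ) : ℂ)

/-- `a₁(x,t,m,ε,u)`: the real part of the wave function. -/
noncomputable def ka1 (m ε : ℝ) (u : ℝ → ℝ → ℝ) (x t : ℝ) : ℝ := (kwf m ε u x t).re

/-- `a₂(x,t,m,ε,u)`: the imaginary part of the wave function. -/
noncomputable def ka2 (m ε : ℝ) (u : ℝ → ℝ → ℝ) (x t : ℝ) : ℝ := (kwf m ε u x t).im

/-- `P(x,t,m,ε,u)`: the probability to find the electron at `(x,t)`. -/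
noncomputable def kP (m ε : ℝ) (u : ℝ → ℝ → ℝ) (x t : ℝ) : ℝ := ‖kwf m ε u x t‖ ^ 2

/- The homogeneous electromagnetic field `u_ε`, as a function of the midpoint `(X,T)`
of an auxiliary edge: for `(x,t) ∈ εℤ²`, `u_ε(x+ε/2, t+ε/2) = -1` iff `(t-x)/(4ε) ∈ ℤ`. -/
open Classical in
noncomputable def uhom (ε : ℝ) : ℝ → ℝ → ℝ := fun X T =>
  if ∃ k : ℤ, T - X = 4 * ε * k then -1 else 1
/-- Extended binomial coefficient: `C(a,b) = 0` if `a < 0` or `b < 0`. -/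
def zchoose (a b : ℤ) : ℤ := if 0 ≤ a ∧ 0 ≤ b then (a.toNat).choose (b.toNat) else 0

/-- Bessel function of the first kind of order 0 (power series). -/
noncomputable def besselJ0 (z : ℝ) : ℝ :=
  ∑' j : ℕ, (-1 : ℝ) ^ j * (z / 2) ^ (2 * j) / ((j.factorial : ℝ)) ^ 2

/-- Bessel function of the first kind of order 1 (power series). -/
noncomputable def besselJ1 (z : ℝ) : ℝ :=
  ∑' j : ℕ, (-1 : ℝ) ^ j * (z / 2) ^ (2 * j + 1) / ((j.factorial : ℝ) * ((j + 1).factorial : ℝ))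

/-- Truncated hypergeometric sum `₂F₁(a,b;c;z)` with integer parameters,
summed for `k = 0, …, K`. -/
noncomputable def hypF (a b c : ℤ) (K : ℕ) (z : ℝ) : ℝ :=
  ∑ k ∈ Finset.range (K + 1),
    (∏ l ∈ Finset.range k, (((a + l) * (b + l) : ℤ) : ℝ) / (((1 + l) * (c + l) : ℤ) : ℝ)) * z ^ k

/-- `ω_p = (1/(2ε))·arcsin(sin(2pε)/(1+m²ε²))`. -/
noncomputable def omg (m ε p : ℝ) : ℝ :=
  (1 / (2 * ε)) * Real.arcsin (Real.sin (2 * p * ε) / (1 + m ^ 2 * ε ^ 2))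

/-- `(-1)^q` for a real exponent `q`, with the convention `(-1)^(n/2) = iⁿ`:
`neg1pow q = exp(iπq)`. -/
noncomputable def neg1pow (q : ℝ) : ℂ := Complex.exp (Complex.I * Real.pi * q)

/-- The Airy function `Ai(λ) = (1/π)·lim_{R→∞} ∫₀^R cos(y³/3 + λy) dy`. -/
noncomputable def AiryAi (lam : ℝ) : ℝ :=
  (1 / Real.pi) *
    Filter.limUnder Filter.atTop (fun R : ℝ => ∫ y in (0 : ℝ)..R, Real.cos (y ^ 3 / 3 + lam * y))

/-- The function `θ̃(v)` from Theorem `Airy` of the paper. -/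
noncomputable def thetaTilde (m ε v : ℝ) : ℝ :=
  (1 / (2 * ε)) *
    (|v| * Real.arccos (|v| * Real.sqrt ((1 + m ^ 2 * ε ^ 2) ^ 2 - 1) / Real.sqrt (1 - v ^ 2)) -
      Real.arccos (Real.sqrt ((1 + m ^ 2 * ε ^ 2) ^ 2 - 1) /
        ((1 + m ^ 2 * ε ^ 2) * Real.sqrt (1 - v ^ 2))))


/-- `chm η j` : `C((η-1)/2, j)` treating `η = 0` as giving `0`. -/
noncomputable def chm (η j : ℕ) : ℝ := if η = 0 then 0 else (((η-1)/2).choose j : ℝ)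

noncomputable def F2v (m : ℝ) (ξ η : ℕ) : ℝ :=
  (-1 : ℝ) ^ (ξ + 1) *
    ∑ j ∈ Finset.range (ξ / 2 + 1),
      ((zchoose ⌊(η : ℝ) / 2⌋ (j : ℤ) : ℝ) * (1 + m ^ 2) ^ ((ξ * η) % 2)
        - (zchoose ⌊((η : ℝ) - 1) / 2⌋ (j : ℤ) : ℝ) * (1 + m ^ 2) ^ ((ξ * (η + 1)) % 2))
        * (zchoose ((ξ : ℤ) / 2) (j : ℤ) : ℝ) * (1 - (1 + m ^ 2) ^ 2) ^ j

noncomputable def F1v (m : ℝ) (ξ η : ℕ) : ℝ :=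
  (-1 : ℝ) ^ (ξ + 1) * m *
    ∑ j ∈ Finset.range (ξ / 2 + 1),
      (zchoose ⌊((η : ℝ) - 1) / 2⌋ (j : ℤ) : ℝ) * (1 + m ^ 2) ^ ((ξ * (η + 1)) % 2)
        * (zchoose ((ξ : ℤ) / 2) (j : ℤ) : ℝ) * (1 - (1 + m ^ 2) ^ 2) ^ j

lemma zchoose_coe (a b : ℕ) : zchoose (a : ℤ) (b : ℤ) = (a.choose b : ℤ) := by
  simp [zchoose]

lemma floor_nat_half (η : ℕ) : ⌊(η : ℝ) / 2⌋ = ((η / 2 : ℕ) : ℤ) := by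
  rw [show ((η:ℝ)) = ((η:ℤ):ℝ) by push_cast; ring, show (2:ℝ) = ((2:ℕ):ℝ) by norm_num,
    ← Rat.cast_intCast, ← Rat.cast_natCast, ← Rat.cast_div, Rat.floor_cast,
    Rat.floor_intCast_div_natCast]
  omega

lemma zch_floor_half (η j : ℕ) : ((zchoose ⌊(η : ℝ) / 2⌋ (j : ℤ) : ℤ) : ℝ) = ((η/2).choose j : ℝ) := by
  rw [floor_nat_half, zchoose_coe]; norm_num

lemma zch_floor_halfm (η j : ℕ) :
    ((zchoose ⌊((η : ℝ) - 1) / 2⌋ (j : ℤ) : ℤ) : ℝ) = chm η j := by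
  cases η with
  | zero =>
      have : ⌊((0 : ℝ) - 1) / 2⌋ = -1 := by norm_num
      simp only [Nat.cast_zero, this, chm, if_pos rfl, zchoose]
      norm_num
  | succ k =>
      have h1 : ((k+1 : ℕ) : ℝ) - 1 = ((k : ℕ) : ℝ) := by push_cast; ring
      rw [h1, floor_nat_half, zchoose_coe]
      simp [chm]

lemma zch_int_div (ξ j : ℕ) : ((zchoose ((ξ : ℤ) / 2) (j : ℤ) : ℤ) : ℝ) = ((ξ/2).choose j : ℝ) := by
  rw [show ((ξ : ℤ)/2) = ((ξ/2 : ℕ) : ℤ) by omega, zchoose_coe]; norm_num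

lemma F2v_eq (m : ℝ) (ξ η : ℕ) :
    F2v m ξ η = (-1 : ℝ) ^ (ξ + 1) *
      ∑ j ∈ Finset.range (ξ / 2 + 1),
        (((η/2).choose j : ℝ) * (1 + m ^ 2) ^ ((ξ * η) % 2)
          - chm η j * (1 + m ^ 2) ^ ((ξ * (η + 1)) % 2))
          * ((ξ/2).choose j : ℝ) * (1 - (1 + m ^ 2) ^ 2) ^ j := by
  unfold F2v
  congr 1
  refine Finset.sum_congr rfl fun j _ => ?_
  rw [zch_floor_half, zch_floor_halfm, zch_int_div]

lemma F1v_eq (m : ℝ) (ξ η : ℕ) :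
    F1v m ξ η = (-1 : ℝ) ^ (ξ + 1) * m *
      ∑ j ∈ Finset.range (ξ / 2 + 1),
        chm η j * (1 + m ^ 2) ^ ((ξ * (η + 1)) % 2)
          * ((ξ/2).choose j : ℝ) * (1 - (1 + m ^ 2) ^ 2) ^ j := by
  unfold F1v
  congr 1
  refine Finset.sum_congr rfl fun j _ => ?_
  rw [zch_floor_halfm, zch_int_div]

lemma chm_succ (η j : ℕ) : chm (η + 1) j = ((η/2).choose j : ℝ) := by
  simp [chm]

lemma chm_odd (δ j : ℕ) : chm (2*δ+1) j = (δ.choose j : ℝ) := by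
  rw [chm_succ]; norm_num [Nat.mul_div_cancel_left]

-- Identity (II)
lemma idII (m : ℝ) (ξ η : ℕ) : F1v m ξ (η + 1) = F1v m ξ η + m * F2v m ξ η := by
  rw [F1v_eq, F1v_eq, F2v_eq]
  have hexp : (ξ * (η + 1 + 1)) % 2 = (ξ * η) % 2 := by
    rw [show ξ * (η + 1 + 1) = ξ * η + ξ * 2 by ring, Nat.add_mul_mod_self_right]
  simp only [hexp, chm_succ]
  rw [show (∑ j ∈ Finset.range (ξ/2+1), ((η/2).choose j : ℝ) * (1+m^2)^((ξ*η)%2) * ((ξ/2).choose j : ℝ) * (1-(1+m^2)^2)^j)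
      = (∑ j ∈ Finset.range (ξ/2+1), chm η j * (1+m^2)^((ξ*(η+1))%2) * ((ξ/2).choose j : ℝ) * (1-(1+m^2)^2)^j)
        + ∑ j ∈ Finset.range (ξ/2+1), (((η/2).choose j : ℝ) * (1+m^2)^((ξ*η)%2) - chm η j * (1+m^2)^((ξ*(η+1))%2)) * ((ξ/2).choose j : ℝ) * (1-(1+m^2)^2)^j
      from by rw [← Finset.sum_add_distrib]; exact Finset.sum_congr rfl fun j _ => by ring]
  ring

lemma sum_choose_zero (N : ℕ) (g : ℕ → ℝ) :
    ∑ j ∈ Finset.range (N + 1), ((0 : ℕ).choose j : ℝ) * g j = g 0 := by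
  rw [Finset.sum_range_succ']
  simp

lemma F1v_eta_zero (m : ℝ) (ξ : ℕ) : F1v m ξ 0 = 0 := by
  rw [F1v_eq]
  have : ∀ j, chm 0 j = 0 := fun j => by simp [chm]
  simp [this]

lemma F2v_zero_zero (m : ℝ) : F2v m 0 0 = -1 := by
  rw [F2v_eq]
  have : chm 0 0 = 0 := by simp [chm]
  simp [this]

lemma F2v_zero_succ (m : ℝ) (η : ℕ) : F2v m 0 (η + 1) = 0 := by
  rw [F2v_eq]
  simp [chm_succ, Nat.zero_mul]

-- key binomial identity (E)
lemma keyE (z : ℝ) (c γ : ℕ) :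
    ∑ j ∈ Finset.range (γ + 2),
        (((c+1).choose j : ℝ) - (c.choose j : ℝ)) * ((γ+1).choose j : ℝ) * z ^ j
      = ∑ j ∈ Finset.range (γ + 1),
        (((c+1).choose j : ℝ) - (c.choose j : ℝ) * (1 - z)) * (γ.choose j : ℝ) * z ^ j := by
  have hpas : ∀ a i : ℕ, ((a+1).choose (i+1) : ℝ) - (a.choose (i+1) : ℝ) = (a.choose i : ℝ) := by
    intro a i
    rw [Nat.choose_succ_succ]
    push_cast
    ring
  -- LHS = ∑_{i<γ+1} C(c,i) C(γ+1,i+1) z^{i+1}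
  rw [Finset.sum_range_succ' _ (γ+1)]
  simp only [hpas, Nat.choose_zero_right, Nat.cast_one]
  rw [show (((1:ℝ) - 1) * 1 * z ^ 0) = 0 by ring, add_zero]
  -- RHS split
  have hrhs : ∀ j : ℕ, (((c+1).choose j : ℝ) - (c.choose j : ℝ) * (1 - z)) * (γ.choose j : ℝ) * z ^ j
      = (((c+1).choose j : ℝ) - (c.choose j : ℝ)) * (γ.choose j : ℝ) * z ^ j
        + (c.choose j : ℝ) * (γ.choose j : ℝ) * z ^ (j+1) := by
    intro j; rw [pow_succ]; ring
  rw [Finset.sum_congr rfl (fun j _ => hrhs j), Finset.sum_add_distrib]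
  rw [Finset.sum_range_succ' (fun j => (((c+1).choose j : ℝ) - (c.choose j : ℝ)) * (γ.choose j : ℝ) * z ^ j) γ]
  simp only [hpas, Nat.choose_zero_right, Nat.cast_one]
  rw [show (((1:ℝ) - 1) * 1 * z ^ 0) = 0 by ring, add_zero]
  -- extend first sum to range (γ+1) by adding zero top term
  have htop : ((c.choose γ : ℝ)) * ((γ.choose (γ+1) : ℝ)) * z ^ (γ+1) = 0 := by
    rw [Nat.choose_eq_zero_of_lt (show γ < γ+1 by omega)]
    simp
  rw [show (∑ i ∈ Finset.range γ, (c.choose i : ℝ) * (γ.choose (i+1) : ℝ) * z ^ (i+1))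
      = ∑ i ∈ Finset.range (γ+1), (c.choose i : ℝ) * (γ.choose (i+1) : ℝ) * z ^ (i+1) from by
        rw [Finset.sum_range_succ, htop, add_zero]]
  rw [← Finset.sum_add_distrib]
  refine Finset.sum_congr rfl fun i _ => ?_
  rw [Nat.choose_succ_succ (γ) (i)]
  push_cast
  ring

lemma sum_head (N : ℕ) (f : ℕ → ℝ) (hf : ∀ j, f (j+1) = 0) :
    ∑ j ∈ Finset.range (N + 1), f j = f 0 := by
  rw [Finset.sum_range_succ']; simp [hf]

-- Identity (I)
lemma idI (m : ℝ) (ξ η : ℕ) :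
    F2v m (ξ+1) η = -((-1:ℝ)^η) * (F2v m ξ η - m * F1v m ξ η) := by
  have sE : ∀ k : ℕ, (-1:ℝ)^(k+k) = 1 := fun k => Even.neg_one_pow ⟨k, rfl⟩
  rcases Nat.even_or_odd ξ with ⟨γ, rfl⟩ | ⟨γ, rfl⟩
  · -- ξ = γ + γ
    have d1 : (γ+γ+1)/2 = γ := by omega
    have d2 : (γ+γ)/2 = γ := by omega
    have sp1 : (-1:ℝ)^(γ+γ+1+1) = 1 := Even.neg_one_pow ⟨γ+1, by ring⟩
    have sp2 : (-1:ℝ)^(γ+γ+1) = -1 := Odd.neg_one_pow ⟨γ, by ring⟩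
    rcases Nat.even_or_odd η with ⟨δ, rfl⟩ | ⟨δ, rfl⟩
    · have e1 : ((γ+γ+1)*(δ+δ))%2 = 0 := by
        rw [show (γ+γ+1)*(δ+δ) = 2*((γ+γ+1)*δ) by ring]; omega
      have e2 : ((γ+γ+1)*(δ+δ+1))%2 = 1 := by
        rw [show (γ+γ+1)*(δ+δ+1) = 2*((γ+γ+1)*δ+γ)+1 by ring]; omega
      have e3 : ((γ+γ)*(δ+δ))%2 = 0 := by
        rw [show (γ+γ)*(δ+δ) = 2*((γ+γ)*δ) by ring]; omega
      have e4 : ((γ+γ)*(δ+δ+1))%2 = 0 := by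
        rw [show (γ+γ)*(δ+δ+1) = 2*((γ+γ)*δ+γ) by ring]; omega
      have dd : (δ+δ)/2 = δ := by omega
      rw [F2v_eq, F2v_eq, F1v_eq]
      simp only [d1, d2, dd, e1, e2, e3, e4, sp1, sp2, sE, pow_zero, pow_one]
      have hkey : ∑ j ∈ Finset.range (γ+1),
            ((δ.choose j : ℝ) * 1 - chm (δ+δ) j * (1+m^2)) * (γ.choose j : ℝ) * (1-(1+m^2)^2)^j
          = (∑ j ∈ Finset.range (γ+1),
              ((δ.choose j : ℝ) * 1 - chm (δ+δ) j * 1) * (γ.choose j : ℝ) * (1-(1+m^2)^2)^j)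
            - m^2 * ∑ j ∈ Finset.range (γ+1),
              chm (δ+δ) j * 1 * (γ.choose j : ℝ) * (1-(1+m^2)^2)^j := by
        rw [Finset.mul_sum, ← Finset.sum_sub_distrib]
        exact Finset.sum_congr rfl fun j _ => by ring
      linear_combination hkey
    · have e1 : ((γ+γ+1)*(2*δ+1))%2 = 1 := by
        rw [show (γ+γ+1)*(2*δ+1) = 2*((γ+γ+1)*δ+γ)+1 by ring]; omega
      have e2 : ((γ+γ+1)*(2*δ+1+1))%2 = 0 := by
        rw [show (γ+γ+1)*(2*δ+1+1) = 2*((γ+γ+1)*(δ+1)) by ring]; omega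
      have e3 : ((γ+γ)*(2*δ+1))%2 = 0 := by
        rw [show (γ+γ)*(2*δ+1) = 2*(γ*(2*δ+1)) by ring]; omega
      have e4 : ((γ+γ)*(2*δ+1+1))%2 = 0 := by
        rw [show (γ+γ)*(2*δ+1+1) = 2*(γ*(2*δ+1+1)) by ring]; omega
      have dd : (2*δ+1)/2 = δ := by omega
      have sp3 : (-1:ℝ)^(2*δ+1) = -1 := Odd.neg_one_pow ⟨δ, by ring⟩
      rw [F2v_eq, F2v_eq, F1v_eq]
      simp only [d1, d2, dd, e1, e2, e3, e4, sp1, sp2, sp3, chm_odd, pow_zero, pow_one]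
      have hkey : ∑ j ∈ Finset.range (γ+1),
            ((δ.choose j : ℝ) * (1+m^2) - (δ.choose j : ℝ) * 1) * (γ.choose j : ℝ) * (1-(1+m^2)^2)^j
          = m^2 * ∑ j ∈ Finset.range (γ+1),
            (δ.choose j : ℝ) * 1 * (γ.choose j : ℝ) * (1-(1+m^2)^2)^j := by
        rw [Finset.mul_sum]
        exact Finset.sum_congr rfl fun j _ => by ring
      have hz : ∑ j ∈ Finset.range (γ+1),
            ((δ.choose j : ℝ) * 1 - (δ.choose j : ℝ) * 1) * (γ.choose j : ℝ) * (1-(1+m^2)^2)^j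
          = 0 := by
        apply Finset.sum_eq_zero; intro j _; ring
      rw [hz]
      linear_combination hkey
  · -- ξ = 2γ+1
    have d1 : (2*γ+1+1)/2 = γ+1 := by omega
    have d2 : (2*γ+1)/2 = γ := by omega
    have sp1 : (-1:ℝ)^(2*γ+1+1+1) = -1 := Odd.neg_one_pow ⟨γ+1, by ring⟩
    have sp2 : (-1:ℝ)^(2*γ+1+1) = 1 := Even.neg_one_pow ⟨γ+1, by ring⟩
    rcases Nat.eq_zero_or_pos η with rfl | hη
    · -- η = 0
      have e1 : ((2*γ+1+1)*0)%2 = 0 := by omega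
      have e2 : ((2*γ+1+1)*(0+1))%2 = 0 := by
        rw [show (2*γ+1+1)*(0+1) = 2*(γ+1) by ring]; omega
      have e3 : ((2*γ+1)*0)%2 = 0 := by omega
      have e4 : ((2*γ+1)*(0+1))%2 = 1 := by
        rw [show (2*γ+1)*(0+1) = 2*γ+1 by ring]; omega
      have dch : ∀ j, chm 0 j = 0 := fun j => by simp [chm]
      have d0 : (0:ℕ)/2 = 0 := by omega
      rw [F2v_eq, F2v_eq, F1v_eq]
      simp only [d1, d2, d0, e1, e2, e3, e4, sp1, sp2, dch, pow_zero, pow_one]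
      have L1 : ∑ j ∈ Finset.range (γ+1+1),
            (((0:ℕ).choose j : ℝ) * 1 - 0 * 1) * ((γ+1).choose j : ℝ) * (1-(1+m^2)^2)^j
          = 1 := by
        rw [sum_head _ _ (fun j => by simp [Nat.choose])]
        simp
      have L2 : ∑ j ∈ Finset.range (γ+1),
            (((0:ℕ).choose j : ℝ) * 1 - 0 * ((1:ℝ)+m^2)) * (γ.choose j : ℝ) * (1-(1+m^2)^2)^j
          = 1 := by
        rw [sum_head _ _ (fun j => by simp [Nat.choose])]
        simp
      rw [L1]
      rw [L2]
      have L3 : ∑ j ∈ Finset.range (γ+1),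
            (0:ℝ) * (1+m^2) * (γ.choose j : ℝ) * (1-(1+m^2)^2)^j = 0 := by
        apply Finset.sum_eq_zero; intro j _; ring
      rw [L3]
      ring
    · -- η ≥ 1
      rcases Nat.even_or_odd η with ⟨δ, hδ⟩ | ⟨δ, rfl⟩
      · -- η = δ' + δ' with δ' ≥ 1 ; write η = 2δ''+2
        obtain ⟨δ', rfl⟩ : ∃ δ', η = 2*δ'+1+1 := ⟨δ - 1, by omega⟩
        have e1 : ((2*γ+1+1)*(2*δ'+1+1))%2 = 0 := by
          rw [show (2*γ+1+1)*(2*δ'+1+1) = 2*((γ+1)*(2*δ'+2)) by ring]; omega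
        have e2 : ((2*γ+1+1)*(2*δ'+1+1+1))%2 = 0 := by
          rw [show (2*γ+1+1)*(2*δ'+1+1+1) = 2*((γ+1)*(2*δ'+3)) by ring]; omega
        have e3 : ((2*γ+1)*(2*δ'+1+1))%2 = 0 := by
          rw [show (2*γ+1)*(2*δ'+1+1) = 2*((2*γ+1)*(δ'+1)) by ring]; omega
        have e4 : ((2*γ+1)*(2*δ'+1+1+1))%2 = 1 := by
          rw [show (2*γ+1)*(2*δ'+1+1+1) = 2*((2*γ+1)*(δ'+1)+γ)+1 by ring]; omega
        have dd : (2*δ'+1+1)/2 = δ'+1 := by omega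
        have dchm : ∀ j, chm (2*δ'+1+1) j = (δ'.choose j : ℝ) := by
          intro j; rw [show 2*δ'+1+1 = (2*δ'+1)+1 by ring, chm_succ,
            show (2*δ'+1)/2 = δ' by omega]
        have sp3 : (-1:ℝ)^(2*δ'+1+1) = 1 := Even.neg_one_pow ⟨δ'+1, by ring⟩
        rw [F2v_eq, F2v_eq, F1v_eq]
        simp only [d1, d2, dd, e1, e2, e3, e4, sp1, sp2, sp3, dchm, pow_zero, pow_one]
        have hkeyE := keyE (1-(1+m^2)^2) δ' γ
        have h1z : ∀ j : ℕ, (((δ'+1).choose j : ℝ) - (δ'.choose j : ℝ) * (1 - (1-(1+m^2)^2))) * (γ.choose j : ℝ) * (1-(1+m^2)^2)^j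
            = (((δ'+1).choose j : ℝ) * 1 - (δ'.choose j : ℝ) * (1+m^2) - m^2 * ((δ'.choose j : ℝ) * (1+m^2))) * (γ.choose j : ℝ) * (1-(1+m^2)^2)^j := by
          intro j; ring
        rw [Finset.sum_congr rfl (fun j _ => h1z j)] at hkeyE
        have hL : ∑ j ∈ Finset.range (γ+1+1),
              (((δ'+1).choose j : ℝ) * 1 - (δ'.choose j : ℝ) * 1) * ((γ+1).choose j : ℝ) * (1-(1+m^2)^2)^j
            = ∑ j ∈ Finset.range (γ+2),
              (((δ'+1).choose j : ℝ) - (δ'.choose j : ℝ)) * ((γ+1).choose j : ℝ) * (1-(1+m^2)^2)^j := by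
          exact Finset.sum_congr rfl fun j _ => by ring
        have hsplit : ∑ j ∈ Finset.range (γ+1),
              (((δ'+1).choose j : ℝ) * 1 - (δ'.choose j : ℝ) * (1+m^2) - m^2 * ((δ'.choose j : ℝ) * (1+m^2))) * (γ.choose j : ℝ) * (1-(1+m^2)^2)^j
            = (∑ j ∈ Finset.range (γ+1),
                (((δ'+1).choose j : ℝ) * 1 - (δ'.choose j : ℝ) * (1+m^2)) * (γ.choose j : ℝ) * (1-(1+m^2)^2)^j)
              - m^2 * ∑ j ∈ Finset.range (γ+1),
                (δ'.choose j : ℝ) * (1+m^2) * (γ.choose j : ℝ) * (1-(1+m^2)^2)^j := by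
          rw [Finset.mul_sum, ← Finset.sum_sub_distrib]
          exact Finset.sum_congr rfl fun j _ => by ring
        rw [hL, hkeyE, hsplit]
        ring
      · -- η = 2δ+1 odd
        have e1 : ((2*γ+1+1)*(2*δ+1))%2 = 0 := by
          rw [show (2*γ+1+1)*(2*δ+1) = 2*((γ+1)*(2*δ+1)) by ring]; omega
        have e2 : ((2*γ+1+1)*(2*δ+1+1))%2 = 0 := by
          rw [show (2*γ+1+1)*(2*δ+1+1) = 2*((γ+1)*(2*δ+2)) by ring]; omega
        have e3 : ((2*γ+1)*(2*δ+1))%2 = 1 := by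
          rw [show (2*γ+1)*(2*δ+1) = 2*((2*γ+1)*δ+γ)+1 by ring]; omega
        have e4 : ((2*γ+1)*(2*δ+1+1))%2 = 0 := by
          rw [show (2*γ+1)*(2*δ+1+1) = 2*((2*γ+1)*(δ+1)) by ring]; omega
        have dd : (2*δ+1)/2 = δ := by omega
        have sp3 : (-1:ℝ)^(2*δ+1) = -1 := Odd.neg_one_pow ⟨δ, by ring⟩
        rw [F2v_eq, F2v_eq, F1v_eq]
        simp only [d1, d2, dd, e1, e2, e3, e4, sp1, sp2, sp3, chm_odd, pow_zero, pow_one]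
        have hL : ∑ j ∈ Finset.range (γ+1+1),
              ((δ.choose j : ℝ) * 1 - (δ.choose j : ℝ) * 1) * ((γ+1).choose j : ℝ) * (1-(1+m^2)^2)^j
            = 0 := by
          apply Finset.sum_eq_zero; intro j _; ring
        have hkey : ∑ j ∈ Finset.range (γ+1),
              ((δ.choose j : ℝ) * (1+m^2) - (δ.choose j : ℝ) * 1) * (γ.choose j : ℝ) * (1-(1+m^2)^2)^j
            = m^2 * ∑ j ∈ Finset.range (γ+1),
              (δ.choose j : ℝ) * 1 * (γ.choose j : ℝ) * (1-(1+m^2)^2)^j := by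
          rw [Finset.mul_sum]
          exact Finset.sum_congr rfl fun j _ => by ring
        have hz : ∑ j ∈ Finset.range (γ+1),
              ((δ.choose j : ℝ) * 1 - (δ.choose j : ℝ) * 1) * (γ.choose j : ℝ) * (1-(1+m^2)^2)^j
            = 0 := by
          apply Finset.sum_eq_zero; intro j _; ring
        rw [hL]
        linear_combination -hkey


lemma extd_snoc {n : ℕ} (e : Fin n → Bool) (b : Bool) (k : ℕ) :
    extd (Fin.snoc e b) k = if k = n then b else extd e k := by
  rcases lt_trichotomy k n with h | rfl | h
  · rw [if_neg (by omega)]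
    unfold extd
    rw [dif_pos (by omega : k < n + 1), dif_pos h]
    exact Fin.snoc_castSucc (α := fun _ : Fin (n+1) => Bool) (p := e) (x := b) (i := ⟨k, h⟩)
  · rw [if_pos rfl]
    unfold extd
    rw [dif_pos (by omega : k < k + 1)]
    exact Fin.snoc_last (α := fun _ : Fin (k+1) => Bool) (p := e) (x := b)
  · rw [if_neg (by omega)]
    unfold extd
    rw [dif_neg (by omega), dif_neg (by omega)]

lemma pathPos_succ {n : ℕ} (d : Fin n → Bool) (k : ℕ) :
    pathPos d (k + 1) = pathPos d k + dirZ (extd d k) := Finset.sum_range_succ _ k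

lemma pathPos_snoc {n : ℕ} (e : Fin n → Bool) (b : Bool) {k : ℕ} (hk : k ≤ n) :
    pathPos (Fin.snoc e b) k = pathPos e k := by
  unfold pathPos
  refine Finset.sum_congr rfl fun i hi => ?_
  rw [extd_snoc, if_neg (by simp at hi; omega)]

lemma pathPos_snoc_top {n : ℕ} (e : Fin n → Bool) (b : Bool) :
    pathPos (Fin.snoc e b) (n + 1) = pathPos e n + dirZ b := by
  rw [pathPos_succ, pathPos_snoc e b le_rfl, extd_snoc, if_pos rfl]

lemma pathTurns_snoc {n : ℕ} (e : Fin n → Bool) (b : Bool) (hn : 1 ≤ n) :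
    pathTurns (Fin.snoc e b) = pathTurns e + (if extd e (n - 1) = b then 0 else 1) := by
  unfold pathTurns
  rw [Finset.range_add_one, Finset.filter_insert]
  have hmem : n ∉ Finset.range n := by simp
  have hcong : Finset.filter (fun k => 0 < k ∧ extd (Fin.snoc e b) (k - 1) ≠ extd (Fin.snoc e b) k) (Finset.range n)
      = Finset.filter (fun k => 0 < k ∧ extd e (k - 1) ≠ extd e k) (Finset.range n) := by
    refine Finset.filter_congr fun k hk => ?_
    simp only [Finset.mem_range] at hk
    rcases Nat.eq_zero_or_pos k with rfl | hk0
    · simp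
    · rw [extd_snoc, extd_snoc, if_neg (by omega), if_neg (by omega)]
  rw [hcong]
  by_cases hb : extd e (n - 1) = b
  · rw [if_neg, if_pos hb, add_zero]
    push_neg
    intro _
    rw [extd_snoc, extd_snoc, if_neg (by omega), if_pos rfl]
    exact hb
  · rw [if_pos, if_neg hb, Finset.card_insert_of_notMem (by simp [hmem])]
    refine ⟨hn, ?_⟩
    rw [extd_snoc, extd_snoc, if_neg (by omega), if_pos rfl]
    exact hb

lemma two_dvd_sub {n : ℕ} (d : Fin n → Bool) (k : ℕ) : (2 : ℤ) ∣ ((k : ℤ) - pathPos d k) := by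
  induction k with
  | zero => simp [pathPos]
  | succ k ih =>
      rw [pathPos_succ]
      rcases extd d k with _ | _ <;> simp only [dirZ] <;> push_cast <;> omega

lemma pathPos_le {n : ℕ} (d : Fin n → Bool) (k : ℕ) : pathPos d k ≤ (k : ℤ) := by
  induction k with
  | zero => simp [pathPos]
  | succ k ih =>
      rw [pathPos_succ]
      have : dirZ (extd d k) ≤ 1 := by rcases extd d k with _ | _ <;> simp [dirZ]
      push_cast
      omega

lemma pathPos_ge {n : ℕ} (d : Fin n → Bool) (hd : extd d 0 = true) {k : ℕ} (hk : 1 ≤ k) :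
    2 - (k : ℤ) ≤ pathPos d k := by
  obtain ⟨k', rfl⟩ : ∃ k', k = k' + 1 := ⟨k - 1, by omega⟩
  have key : ∀ j : ℕ, -(j : ℤ) ≤ ∑ i ∈ Finset.range j, dirZ (extd d (i + 1)) := by
    intro j
    induction j with
    | zero => simp
    | succ j ih =>
        rw [Finset.sum_range_succ]
        have : -1 ≤ dirZ (extd d (j + 1)) := by rcases extd d (j+1) with _ | _ <;> simp [dirZ]
        push_cast
        omega
  have : pathPos d (k' + 1) = (∑ i ∈ Finset.range k', dirZ (extd d (i + 1))) + dirZ (extd d 0) := by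
    unfold pathPos
    rw [Finset.sum_range_succ']
  rw [this, hd]
  have hk2 := key k'
  rw [show dirZ true = (1:ℤ) from rfl]
  push_cast
  omega

lemma uhom_eval_true (p : ℤ) (k : ℕ) :
    uhom 1 ((p : ℝ) + ((dirZ true : ℤ) : ℝ) / 2) ((k : ℝ) + 1 / 2)
      = if (4 : ℤ) ∣ ((k : ℤ) - p) then -1 else 1 := by
  unfold uhom
  have harg : ∀ j : ℤ, (((k : ℝ) + 1/2) - ((p : ℝ) + ((dirZ true : ℤ) : ℝ)/2) = 4 * 1 * (j : ℝ))
      ↔ ((k : ℤ) - p = 4 * j) := by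
    intro j
    simp only [dirZ, if_pos]
    constructor
    · intro h
      have : (((k : ℤ) - p : ℤ) : ℝ) = ((4 * j : ℤ) : ℝ) := by push_cast; push_cast at h; linarith
      exact_mod_cast this
    · intro h
      have : (((k : ℤ) - p : ℤ) : ℝ) = ((4 * j : ℤ) : ℝ) := by exact_mod_cast h
      push_cast at this ⊢
      linarith
  by_cases h : (4 : ℤ) ∣ ((k : ℤ) - p)
  · rw [if_pos, if_pos h]
    obtain ⟨j, hj⟩ := h
    exact ⟨j, (harg j).2 hj⟩
  · rw [if_neg, if_neg h]
    rintro ⟨j, hj⟩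
    exact h ⟨j, (harg j).1 hj⟩

lemma uhom_eval_false (p : ℤ) (k : ℕ) (hpar : (2 : ℤ) ∣ ((k : ℤ) - p)) :
    uhom 1 ((p : ℝ) + ((dirZ false : ℤ) : ℝ) / 2) ((k : ℝ) + 1 / 2) = 1 := by
  unfold uhom
  rw [if_neg]
  rintro ⟨j, hj⟩
  simp only [dirZ, if_neg (by simp : ¬ (false = true))] at hj
  have : (((k : ℤ) - p + 1 : ℤ) : ℝ) = ((4 * j : ℤ) : ℝ) := by push_cast; push_cast at hj; linarith
  have h2 : (k : ℤ) - p + 1 = 4 * j := by exact_mod_cast this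
  omega

noncomputable def W (m : ℝ) (n : ℕ) (d : Fin n → Bool) : ℂ :=
  (-(Complex.I) * (m : ℂ)) ^ (pathTurns d) *
    ∏ k ∈ Finset.range n,
      ((uhom 1 ((pathPos d k : ℤ) + ((dirZ (extd d k) : ℤ) : ℝ) / 2) ((k : ℕ) + 1 / 2) : ℝ) : ℂ)

noncomputable def Spath (m : ℝ) (n : ℕ) (x : ℤ) (b : Bool) : ℂ :=
  ∑ d ∈ Finset.univ.filter (fun d : Fin n → Bool =>
      extd d 0 = true ∧ pathPos d n = x ∧ extd d (n - 1) = b), W m n d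

lemma W_snoc (m : ℝ) {n : ℕ} (hn : 1 ≤ n) (e : Fin n → Bool) (b : Bool) :
    W m (n + 1) (Fin.snoc e b)
      = W m n e * (-(Complex.I) * (m : ℂ)) ^ (if extd e (n - 1) = b then 0 else 1)
          * ((uhom 1 ((pathPos e n : ℤ) + ((dirZ b : ℤ) : ℝ) / 2) ((n : ℕ) + 1 / 2) : ℝ) : ℂ) := by
  unfold W
  rw [pathTurns_snoc e b hn, pow_add, Finset.prod_range_succ]
  have hprod : ∀ k ∈ Finset.range n,
      ((uhom 1 ((pathPos (Fin.snoc e b) k : ℤ) + ((dirZ (extd (Fin.snoc e b) k) : ℤ) : ℝ) / 2) ((k : ℕ) + 1 / 2) : ℝ) : ℂ)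
        = ((uhom 1 ((pathPos e k : ℤ) + ((dirZ (extd e k) : ℤ) : ℝ) / 2) ((k : ℕ) + 1 / 2) : ℝ) : ℂ) := by
    intro k hk
    simp only [Finset.mem_range] at hk
    rw [pathPos_snoc e b (le_of_lt hk), extd_snoc, if_neg (by omega)]
  rw [Finset.prod_congr rfl hprod, pathPos_snoc e b le_rfl, extd_snoc, if_pos rfl]
  ring

lemma spath_bij (m : ℝ) {n : ℕ} (hn : 1 ≤ n) (x : ℤ) (b : Bool) :
    Spath m (n + 1) x b
      = ∑ e ∈ Finset.univ.filter (fun e : Fin n → Bool =>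
          extd e 0 = true ∧ pathPos e n = x - dirZ b), W m (n + 1) (Fin.snoc e b) := by
  unfold Spath
  refine Finset.sum_nbij' (fun d => fun i : Fin n => d i.castSucc) (fun e => Fin.snoc e b)
    ?_ ?_ ?_ ?_ ?_
  · intro d hd
    simp only [Finset.mem_filter, Finset.mem_univ, true_and] at hd ⊢
    obtain ⟨h0, hpos, hlast⟩ := hd
    have hres : ∀ k : ℕ, k < n → extd (fun i : Fin n => d i.castSucc) k = extd d k := by
      intro k hk
      unfold extd
      rw [dif_pos hk, dif_pos (by omega : k < n + 1)]
      rfl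
    constructor
    · rw [hres 0 (by omega)]; exact h0
    · have hp : pathPos (fun i : Fin n => d i.castSucc) n = pathPos d n := by
        refine Finset.sum_congr rfl fun i hi => ?_
        simp only [Finset.mem_range] at hi
        rw [hres i hi]
      have hlast' : extd d n = b := by simpa using hlast
      have := pathPos_succ d n
      rw [hlast'] at this
      rw [hp]
      omega
  · intro e he
    simp only [Finset.mem_filter, Finset.mem_univ, true_and] at he ⊢
    obtain ⟨h0, hpos⟩ := he
    refine ⟨?_, ?_, ?_⟩
    · rw [extd_snoc, if_neg (by omega)]; exact h0
    · rw [pathPos_snoc_top]; omega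
    · simp only [Nat.add_sub_cancel]
      rw [extd_snoc, if_pos rfl]
  · intro d hd
    simp only [Finset.mem_filter, Finset.mem_univ, true_and] at hd
    obtain ⟨h0, hpos, hlast⟩ := hd
    show Fin.snoc (fun i : Fin n => d i.castSucc) b = d
    funext i
    refine Fin.lastCases ?_ (fun j => ?_) i
    · rw [Fin.snoc_last]
      have h1 : extd d n = b := by simpa using hlast
      unfold extd at h1
      rw [dif_pos (by omega : n < n + 1)] at h1
      exact h1.symm
    · rw [Fin.snoc_castSucc]
  · intro e he
    funext i
    exact Fin.snoc_castSucc (α := fun _ : Fin (n+1) => Bool) (p := e) (x := b) (i := i)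
  · intro d hd
    simp only [Finset.mem_filter, Finset.mem_univ, true_and] at hd
    obtain ⟨h0, hpos, hlast⟩ := hd
    have hsn : Fin.snoc (fun i : Fin n => d i.castSucc) b = d := by
      funext i
      refine Fin.lastCases ?_ (fun j => ?_) i
      · rw [Fin.snoc_last]
        have h1 : extd d n = b := by simpa using hlast
        unfold extd at h1
        rw [dif_pos (by omega : n < n + 1)] at h1
        exact h1.symm
      · rw [Fin.snoc_castSucc]
    show W m (n+1) d = W m (n+1) (Fin.snoc (fun i : Fin n => d i.castSucc) b)
    rw [hsn]

lemma Spath_succ_true (m : ℝ) {n : ℕ} (hn : 1 ≤ n) (x : ℤ) :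
    Spath m (n + 1) x true
      = (if (4 : ℤ) ∣ ((n : ℤ) - (x - 1)) then (-1 : ℂ) else 1) *
          (Spath m n (x - 1) true + (-(Complex.I) * (m : ℂ)) * Spath m n (x - 1) false) := by
  rw [spath_bij m hn]
  simp only [show dirZ true = (1 : ℤ) from rfl]
  have step : ∀ e ∈ Finset.univ.filter (fun e : Fin n → Bool =>
      extd e 0 = true ∧ pathPos e n = x - 1),
      W m (n + 1) (Fin.snoc e true)
        = (if (4 : ℤ) ∣ ((n : ℤ) - (x - 1)) then (-1 : ℂ) else 1) *
            ((-(Complex.I) * (m : ℂ)) ^ (if extd e (n - 1) = true then 0 else 1) * W m n e) := by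
    intro e he
    simp only [Finset.mem_filter, Finset.mem_univ, true_and] at he
    rw [W_snoc m hn e true, he.2, uhom_eval_true (x - 1) n]
    rw [show (((if (4:ℤ) ∣ ((n:ℤ) - (x-1)) then (-1:ℝ) else 1) : ℝ) : ℂ)
        = (if (4:ℤ) ∣ ((n:ℤ) - (x-1)) then (-1:ℂ) else 1) from by
      by_cases h : (4:ℤ) ∣ ((n:ℤ) - (x-1)) <;> simp [h]]
    ring
  rw [Finset.sum_congr rfl step, ← Finset.mul_sum]
  congr 1
  rw [← Finset.sum_filter_add_sum_filter_not
    (Finset.univ.filter (fun e : Fin n → Bool => extd e 0 = true ∧ pathPos e n = x - 1))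
    (fun e => extd e (n - 1) = true)]
  congr 1
  · rw [Finset.filter_filter]
    unfold Spath
    rw [Finset.filter_congr (fun e _ => by tauto :
      ∀ e ∈ (Finset.univ : Finset (Fin n → Bool)),
        ((extd e 0 = true ∧ pathPos e n = x - 1) ∧ extd e (n-1) = true)
          ↔ (extd e 0 = true ∧ pathPos e n = x - 1 ∧ extd e (n-1) = true))]
    refine Finset.sum_congr rfl fun e he => ?_
    simp only [Finset.mem_filter, Finset.mem_univ, true_and] at he
    rw [if_pos he.2.2]
    ring
  · rw [Finset.filter_filter]
    unfold Spath
    rw [Finset.mul_sum]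
    rw [Finset.filter_congr (fun e _ => by
        rw [Bool.not_eq_true]
        tauto :
      ∀ e ∈ (Finset.univ : Finset (Fin n → Bool)),
        ((extd e 0 = true ∧ pathPos e n = x - 1) ∧ ¬(extd e (n-1) = true))
          ↔ (extd e 0 = true ∧ pathPos e n = x - 1 ∧ extd e (n-1) = false))]
    refine Finset.sum_congr rfl fun e he => ?_
    simp only [Finset.mem_filter, Finset.mem_univ, true_and] at he
    rw [if_neg (by rw [he.2.2]; simp)]
    ring

lemma Spath_succ_false (m : ℝ) {n : ℕ} (hn : 1 ≤ n) (x : ℤ) :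
    Spath m (n + 1) x false
      = Spath m n (x + 1) false + (-(Complex.I) * (m : ℂ)) * Spath m n (x + 1) true := by
  rw [spath_bij m hn]
  simp only [show dirZ false = (-1 : ℤ) from rfl, sub_neg_eq_add]
  have step : ∀ e ∈ Finset.univ.filter (fun e : Fin n → Bool =>
      extd e 0 = true ∧ pathPos e n = x + 1),
      W m (n + 1) (Fin.snoc e false)
        = (-(Complex.I) * (m : ℂ)) ^ (if extd e (n - 1) = false then 0 else 1) * W m n e := by
    intro e he
    rw [W_snoc m hn e false, uhom_eval_false (pathPos e n) n (two_dvd_sub e n)]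
    push_cast
    ring
  rw [Finset.sum_congr rfl step]
  rw [← Finset.sum_filter_add_sum_filter_not
    (Finset.univ.filter (fun e : Fin n → Bool => extd e 0 = true ∧ pathPos e n = x + 1))
    (fun e => extd e (n - 1) = false)]
  congr 1
  · rw [Finset.filter_filter]
    unfold Spath
    rw [Finset.filter_congr (fun e _ => by tauto :
      ∀ e ∈ (Finset.univ : Finset (Fin n → Bool)),
        ((extd e 0 = true ∧ pathPos e n = x + 1) ∧ extd e (n-1) = false)
          ↔ (extd e 0 = true ∧ pathPos e n = x + 1 ∧ extd e (n-1) = false))]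
    refine Finset.sum_congr rfl fun e he => ?_
    simp only [Finset.mem_filter, Finset.mem_univ, true_and] at he
    rw [if_pos he.2.2]
    ring
  · rw [Finset.filter_filter]
    unfold Spath
    rw [Finset.mul_sum]
    rw [Finset.filter_congr (fun e _ => by
        rw [Bool.not_eq_false]
        tauto :
      ∀ e ∈ (Finset.univ : Finset (Fin n → Bool)),
        ((extd e 0 = true ∧ pathPos e n = x + 1) ∧ ¬(extd e (n-1) = false))
          ↔ (extd e 0 = true ∧ pathPos e n = x + 1 ∧ extd e (n-1) = true))]
    refine Finset.sum_congr rfl fun e he => ?_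
    simp only [Finset.mem_filter, Finset.mem_univ, true_and] at he
    rw [if_neg (by rw [he.2.2]; simp)]
    ring

lemma Spath_zero_low (m : ℝ) {n : ℕ} (hn : 1 ≤ n) {x : ℤ} (hx : x < 2 - (n : ℤ)) (b : Bool) :
    Spath m n x b = 0 := by
  apply Finset.sum_eq_zero
  intro d hd
  exfalso
  simp only [Finset.mem_filter, Finset.mem_univ, true_and] at hd
  have := pathPos_ge d hd.1 hn
  omega

lemma Spath_zero_high (m : ℝ) {n : ℕ} {x : ℤ} (hx : (n : ℤ) < x) (b : Bool) :
    Spath m n x b = 0 := by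
  apply Finset.sum_eq_zero
  intro d hd
  exfalso
  simp only [Finset.mem_filter, Finset.mem_univ, true_and] at hd
  have := pathPos_le d n
  omega

lemma Spath_base_true (m : ℝ) : Spath m 1 1 true = -1 := by
  unfold Spath
  have hmem : (fun _ : Fin 1 => true) ∈ Finset.univ.filter (fun d : Fin 1 → Bool =>
      extd d 0 = true ∧ pathPos d 1 = 1 ∧ extd d (1 - 1) = true) := by
    simp only [Finset.mem_filter, Finset.mem_univ, true_and]
    refine ⟨rfl, ?_, rfl⟩
    unfold pathPos
    rw [Finset.sum_range_one]
    rfl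
  rw [Finset.sum_eq_single_of_mem _ hmem]
  · unfold W
    have ht : pathTurns (fun _ : Fin 1 => true) = 0 := by
      unfold pathTurns
      rw [Finset.range_one]
      rw [show Finset.filter (fun k => 0 < k ∧ ¬extd (fun _ : Fin 1 => true) (k - 1) = extd (fun _ : Fin 1 => true) k) {0} = ∅ from by
        rw [Finset.filter_eq_empty_iff]
        intro k hk
        simp only [Finset.mem_singleton] at hk
        subst hk
        simp]
      rfl
    rw [ht, pow_zero, Finset.prod_range_one]
    have hp : pathPos (fun _ : Fin 1 => true) 0 = 0 := by simp [pathPos]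
    have he : extd (fun _ : Fin 1 => true) 0 = true := rfl
    rw [hp, he]
    rw [show ((0:ℤ) : ℝ) = ((0:ℤ) : ℝ) from rfl, show ((0:ℕ) : ℝ) = ((0:ℕ) : ℝ) from rfl]
    rw [uhom_eval_true 0 0]
    norm_num
  · intro d hd hne
    exfalso
    simp only [Finset.mem_filter, Finset.mem_univ, true_and] at hd
    apply hne
    funext i
    have hi : i = (0 : Fin 1) := Subsingleton.elim _ _
    rw [hi]
    exact hd.1

lemma Spath_base_false (m : ℝ) : Spath m 1 1 false = 0 := by
  apply Finset.sum_eq_zero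
  intro d hd
  exfalso
  simp only [Finset.mem_filter, Finset.mem_univ, true_and] at hd
  rw [hd.1] at hd
  exact absurd hd.2.2 (by simp)


lemma main_ind (m : ℝ) : ∀ n : ℕ, ∀ ξ η : ℕ, ξ + η = n →
    Spath m (n + 1) ((ξ : ℤ) - η + 1) true = ((F2v m ξ η : ℝ) : ℂ) ∧
    Spath m (n + 1) ((ξ : ℤ) - η + 1) false = -(Complex.I) * ((F1v m ξ η : ℝ) : ℂ) := by
  intro n
  induction n with
  | zero =>
      intro ξ η h
      have hξ : ξ = 0 := by omega
      have hη : η = 0 := by omega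
      subst hξ; subst hη
      constructor
      · rw [show ((0:ℕ):ℤ) - ((0:ℕ):ℤ) + 1 = 1 by norm_num, Spath_base_true, F2v_zero_zero]
        norm_num
      · rw [show ((0:ℕ):ℤ) - ((0:ℕ):ℤ) + 1 = 1 by norm_num, Spath_base_false, F1v_eta_zero]
        norm_num
  | succ n ih =>
      intro ξ η hsum
      have h1 : (1:ℕ) ≤ n + 1 := by omega
      constructor
      · rw [Spath_succ_true m h1]
        cases ξ with
        | zero =>
            have hη : η = n + 1 := by omega
            subst hη
            have hx : ((0:ℕ):ℤ) - ((n+1:ℕ):ℤ) + 1 - 1 = -(((n+1):ℕ):ℤ) := by push_cast; ring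
            rw [hx, Spath_zero_low m h1 (by push_cast; omega) true,
              Spath_zero_low m h1 (by push_cast; omega) false, F2v_zero_succ]
            norm_num
        | succ ζ =>
            obtain ⟨IH1, IH2⟩ := ih ζ η (by omega)
            have hx : ((ζ+1:ℕ):ℤ) - (η:ℤ) + 1 - 1 = ((ζ:ℕ):ℤ) - (η:ℤ) + 1 := by push_cast; ring
            rw [hx, IH1, IH2]
            have hdvd : ((n+1:ℕ):ℤ) - (((ζ:ℕ):ℤ) - (η:ℤ) + 1) = 2 * η := by push_cast; omega
            rw [hdvd, idI m ζ η]
            rcases Nat.even_or_odd η with ⟨t, rfl⟩ | ⟨t, rfl⟩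
            · rw [if_pos (by push_cast; exact ⟨t, by ring⟩)]
              have hs : (-1:ℝ)^(t+t) = 1 := Even.neg_one_pow ⟨t, rfl⟩
              rw [hs]
              push_cast
              linear_combination (-(m:ℂ) * ((F1v m ζ (t+t) : ℝ):ℂ)) * Complex.I_sq
            · rw [if_neg (by
                push_cast
                rintro ⟨j, hj⟩
                omega)]
              have hs : (-1:ℝ)^(2*t+1) = -1 := Odd.neg_one_pow ⟨t, by ring⟩
              rw [hs]
              push_cast
              linear_combination ((m:ℂ) * ((F1v m ζ (2*t+1) : ℝ):ℂ)) * Complex.I_sq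
      · rw [Spath_succ_false m h1]
        cases η with
        | zero =>
            have hξ : ξ = n + 1 := by omega
            subst hξ
            have hx : ((n+1:ℕ):ℤ) - ((0:ℕ):ℤ) + 1 + 1 = ((n+1:ℕ):ℤ) + 2 := by push_cast; ring
            rw [hx, Spath_zero_high m (by push_cast; omega) false,
              Spath_zero_high m (by push_cast; omega) true, F1v_eta_zero]
            norm_num
        | succ η' =>
            obtain ⟨IH1, IH2⟩ := ih ξ η' (by omega)
            have hx : (ξ:ℤ) - ((η'+1:ℕ):ℤ) + 1 + 1 = (ξ:ℤ) - ((η':ℕ):ℤ) + 1 := by push_cast; ring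
            rw [hx, IH1, IH2, show (η' + 1 : ℕ) = η' + 1 from rfl, idII m ξ η']
            push_cast
            ring

/-- Proposition (exact solution, second component). -/
theorem exact_solution_a2 (m : ℝ) (hm : 0 ≤ m) (ξ η : ℕ) :
    ka2 m 1 (uhom 1) ((ξ : ℝ) - η + 1) ((ξ : ℝ) + η + 1)
      = ((-1 : ℝ) ^ (ξ + 1) / (1 + m ^ 2) ^ (((ξ : ℝ) + η) / 2))
        * ∑ j ∈ Finset.range (ξ / 2 + 1),
            ((zchoose ⌊(η : ℝ) / 2⌋ (j : ℤ) : ℝ) * (1 + m ^ 2) ^ ((ξ * η) % 2)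
              - (zchoose ⌊((η : ℝ) - 1) / 2⌋ (j : ℤ) : ℝ) * (1 + m ^ 2) ^ ((ξ * (η + 1)) % 2))
              * (zchoose ((ξ : ℤ) / 2) (j : ℤ) : ℝ) * (1 - (1 + m ^ 2) ^ 2) ^ j := by
  have hm2 : (0:ℝ) < 1 + m ^ 2 := by positivity
  unfold ka2 kwf
  have hT : (⌊(((ξ:ℝ) + η + 1)) / 1⌋).toNat = ξ + η + 1 := by
    rw [div_one, show ((ξ:ℝ) + η + 1) = ((ξ+η+1 : ℕ) : ℝ) by push_cast; ring, Int.floor_natCast]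
    omega
  have hX : ⌊(((ξ:ℝ) - η + 1)) / 1⌋ = (ξ:ℤ) - η + 1 := by
    rw [div_one, show ((ξ:ℝ) - η + 1) = (((ξ:ℤ) - η + 1 : ℤ) : ℝ) by push_cast; ring,
      Int.floor_intCast]
  rw [hT, hX]
  simp only [Complex.ofReal_one, mul_one, one_mul]
  have hsum : ∑ d ∈ Finset.univ.filter
      (fun d : Fin (ξ+η+1) → Bool =>
        extd d 0 = true ∧ pathPos d (ξ+η+1) = (ξ:ℤ) - η + 1),
      ((-(Complex.I) * ((m : ℝ) : ℂ)) ^ (pathTurns d) *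
        ∏ k ∈ Finset.range (ξ+η+1),
          ((uhom 1 ((pathPos d k : ℤ) + ((dirZ (extd d k) : ℤ) : ℝ) / 2) ((k : ℕ) + 1 / 2) : ℝ) : ℂ))
      = Spath m (ξ+η+1) ((ξ:ℤ) - η + 1) true + Spath m (ξ+η+1) ((ξ:ℤ) - η + 1) false := by
    rw [← Finset.sum_filter_add_sum_filter_not
      (Finset.univ.filter (fun d : Fin (ξ+η+1) → Bool =>
        extd d 0 = true ∧ pathPos d (ξ+η+1) = (ξ:ℤ) - η + 1))
      (fun d => extd d (ξ+η+1-1) = true)]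
    congr 1
    · rw [Finset.filter_filter]
      unfold Spath
      rw [Finset.filter_congr (fun e _ => by tauto :
        ∀ e ∈ (Finset.univ : Finset (Fin (ξ+η+1) → Bool)),
          ((extd e 0 = true ∧ pathPos e (ξ+η+1) = (ξ:ℤ) - η + 1) ∧ extd e (ξ+η+1-1) = true)
            ↔ (extd e 0 = true ∧ pathPos e (ξ+η+1) = (ξ:ℤ) - η + 1 ∧ extd e (ξ+η+1-1) = true))]
      rfl
    · rw [Finset.filter_filter]
      unfold Spath
      rw [Finset.filter_congr (fun e _ => by
          rw [Bool.not_eq_true]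
          tauto :
        ∀ e ∈ (Finset.univ : Finset (Fin (ξ+η+1) → Bool)),
          ((extd e 0 = true ∧ pathPos e (ξ+η+1) = (ξ:ℤ) - η + 1) ∧ ¬(extd e (ξ+η+1-1) = true))
            ↔ (extd e 0 = true ∧ pathPos e (ξ+η+1) = (ξ:ℤ) - η + 1 ∧ extd e (ξ+η+1-1) = false))]
      rfl
  rw [hsum, (main_ind m (ξ+η) ξ η rfl).1, (main_ind m (ξ+η) ξ η rfl).2]
  have hr : ((1 : ℝ) + m ^ 2 * 1 ^ 2) ^ ((1 - ((ξ:ℝ) + η + 1) / 1) / 2)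
      = ((1 + m ^ 2) ^ (((ξ:ℝ) + η) / 2))⁻¹ := by
    rw [one_pow, mul_one, div_one,
      show ((1 - ((ξ:ℝ) + η + 1)) / 2) = -(((ξ:ℝ) + η) / 2) by ring]
    exact Real.rpow_neg hm2.le _
  rw [hr]
  have him : ∀ a b c : ℝ,
      (((a : ℂ)) * Complex.I * ((b : ℂ) + -(Complex.I) * (c : ℂ))).im = a * b := by
    intro a b c
    simp [Complex.mul_im, Complex.mul_re, Complex.add_im, Complex.add_re]
  rw [him]
  unfold F2v
  ring
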